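/- arXiv:2410.04583 — 7 statements merged into one kernel-verified Lean document; each statement's English description precedes it below -/
import Mathlib

section
/- Fix ε > 0 and set λ := 1 + ε. For each integer n ≥ 1 let Pₙ ⊆ ℂ and let 0 < rₙ ≤ 1 satisfy the (c,α)-Diophantine condition rₙ ≥ c/n^α for some c > 0, α > 0. Let V ⊆ ℂ be open, and suppose fₙ is holomorphic on an open set containing Vₙ(r) := V \ ⋃_{p∈Pₙ} D(p, rₙ) with sup_{z ∈ Vₙ(r)} |fₙ(z)| ≤ A·ρⁿ for constants A > 0 and 0 < ρ < 1 (f is meandromorphic). Let V' ⊆ V be open with δ(V',V) ≥ ε. Then for every z₀ ∈ ⋂_{n≥1} V'ₙ(λr) and every integer m ≥ 0, the series Σ_{n≥1} fₙ^{(m)}(z₀) converges absolutely and |Σ_{n≥1} fₙ^{(m)}(z₀)| ≤ (A·m!/(c^m·ε^m)) · Σ_{n≥1} n^{α m} ρⁿ, the last series being finite. -/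
open Metric Set

/-- The Huygens distance `δ(U,V)`. -/
noncomputable def huygens (U V : Set ℂ) : ℝ :=
  sSup {ρ : ℝ | 0 < ρ ∧ ∀ z ∈ U, Metric.ball z ρ ⊆ V}

/-- The `n`-th sheet `Vₙ(r) = V \ ⋃_{p ∈ Pₙ} D(p, rₙ)` of the `r`-perforation.
(The index `n : ℕ` represents the sheet `n+1` of the paper.) -/
def perfSheet (V : Set ℂ) (P : ℕ → Set ℂ) (r : ℕ → ℝ) (n : ℕ) : Set ℂ :=
  V \ ⋃ p ∈ P n, Metric.ball p (r n)

lemma cauchy_deriv_bound {f : ℂ → ℂ} {z₀ : ℂ} {R M : ℝ} (hR : 0 < R)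
    (hd : DifferentiableOn ℂ f (Metric.closedBall z₀ R))
    (hM : ∀ z ∈ Metric.closedBall z₀ R, ‖f z‖ ≤ M) (m : ℕ) :
    ‖iteratedDeriv m f z₀‖ ≤ (Nat.factorial m : ℝ) * M / R ^ m := by
  have hM0 : 0 ≤ M := le_trans (norm_nonneg _) (hM z₀ (Metric.mem_closedBall_self hR.le))
  set R' : NNReal := ⟨R, hR.le⟩ with hR'def
  have hco : (R' : ℝ) = R := rfl
  have hR0 : 0 < R' := by exact_mod_cast hR
  set p := cauchyPowerSeries f z₀ R' with hp
  have h : HasFPowerSeriesOnBall f p z₀ R' := by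
    refine DifferentiableOn.hasFPowerSeriesOnBall ?_ hR0
    rw [hco]; exact hd
  have h2 := h.factorial_smul (1 : ℂ) m
  have hcont : ContinuousOn (fun θ : ℝ => ‖f (circleMap z₀ R θ)‖) (Set.uIcc 0 (2 * Real.pi)) := by
    apply ContinuousOn.norm
    apply hd.continuousOn.comp (continuous_circleMap z₀ R).continuousOn
    intro θ _
    exact sphere_subset_closedBall (circleMap_mem_sphere z₀ hR.le θ)
  have hint : (∫ θ : ℝ in (0)..2 * Real.pi, ‖f (circleMap z₀ R θ)‖) ≤ 2 * Real.pi * M := by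
    have := intervalIntegral.integral_mono_on (μ := MeasureTheory.volume) (g := fun _ : ℝ => M)
      Real.two_pi_pos.le hcont.intervalIntegrable intervalIntegrable_const
      (fun θ _ => hM _ (sphere_subset_closedBall (circleMap_mem_sphere z₀ hR.le θ)))
    simpa using this
  have hpm : ‖p m‖ ≤ M * (R ^ m)⁻¹ := by
    refine le_trans ?_ (mul_le_mul_of_nonneg_right
      (show (2 * Real.pi)⁻¹ * (∫ θ : ℝ in (0)..2 * Real.pi, ‖f (circleMap z₀ R θ)‖) ≤ M by
        rw [inv_mul_le_iff₀ Real.two_pi_pos]; linarith [hint])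
      (by positivity : (0:ℝ) ≤ (R ^ m)⁻¹))
    have := norm_cauchyPowerSeries_le f z₀ (R' : ℝ) m
    rw [hco, abs_of_pos hR, inv_pow] at this
    exact this
  have hfd : iteratedDeriv m f z₀ = iteratedFDeriv ℂ m f z₀ (fun _ => 1) :=
    iteratedDeriv_eq_iteratedFDeriv
  calc ‖iteratedDeriv m f z₀‖
      = ‖iteratedFDeriv ℂ m f z₀ (fun _ => 1)‖ := by rw [hfd]
    _ = ‖(m.factorial) • p m (fun _ => (1 : ℂ))‖ := by rw [h2]
    _ = (m.factorial : ℝ) * ‖p m (fun _ => (1 : ℂ))‖ := by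
        rw [← Nat.cast_smul_eq_nsmul ℝ, norm_smul, Real.norm_natCast]
    _ ≤ (m.factorial : ℝ) * ‖p m‖ := by
        apply mul_le_mul_of_nonneg_left _ (by positivity)
        have := (p m).le_opNorm (fun _ => (1 : ℂ))
        simpa using this
    _ ≤ (m.factorial : ℝ) * (M * (R ^ m)⁻¹) :=
        mul_le_mul_of_nonneg_left hpm (by positivity)
    _ = (m.factorial : ℝ) * M / R ^ m := by ring

/-- For a meandromorphic sequence (`|fₙ| ≤ A ρⁿ` on the sheets) over a `(c,α)`-Diophantine
perforation (`rₙ ≥ c/n^α`), with `δ(V',V) ≥ ε`, `λ = 1+ε`, at every point `z₀` of the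
residual set of the `λr`-perforation of `V'` and every `m ≥ 0`, the series
`Σₙ fₙ^{(m)}(z₀)` converges absolutely and
`|Σₙ fₙ^{(m)}(z₀)| ≤ (A m!/(c^m ε^m)) Σₙ n^{αm} ρⁿ`, the latter series being finite. -/
theorem meandromorphic_derivative_bound (ε : ℝ) (hε : 0 < ε) (lam : ℝ) (hlam : lam = 1 + ε)
    (P : ℕ → Set ℂ) (r : ℕ → ℝ) (hr0 : ∀ n, 0 < r n) (hr1 : ∀ n, r n ≤ 1)
    (c α : ℝ) (hc : 0 < c) (hα : 0 < α)
    (hdioph : ∀ n : ℕ, c / ((n : ℝ) + 1) ^ α ≤ r n)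
    (V : Set ℂ) (hV : IsOpen V) (f : ℕ → ℂ → ℂ)
    (hf : ∀ n, ∃ O : Set ℂ, IsOpen O ∧ perfSheet V P r n ⊆ O ∧ DifferentiableOn ℂ (f n) O)
    (A ρ : ℝ) (hA : 0 < A) (hρ0 : 0 < ρ) (hρ1 : ρ < 1)
    (hbound : ∀ n, ∀ z ∈ perfSheet V P r n, ‖f n z‖ ≤ A * ρ ^ (n + 1))
    (V' : Set ℂ) (hV' : IsOpen V') (hV'V : V' ⊆ V) (hδ : ε ≤ huygens V' V)
    (z₀ : ℂ) (hz₀ : z₀ ∈ ⋂ n, perfSheet V' P (fun i => lam * r i) n) (m : ℕ) :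
    (Summable fun n => ‖iteratedDeriv m (f n) z₀‖) ∧
    (Summable fun n : ℕ => ((n : ℝ) + 1) ^ (α * (m : ℝ)) * ρ ^ (n + 1)) ∧
    ‖∑' n, iteratedDeriv m (f n) z₀‖ ≤
      A * (Nat.factorial m : ℝ) / (c ^ m * ε ^ m) *
        ∑' n : ℕ, ((n : ℝ) + 1) ^ (α * (m : ℝ)) * ρ ^ (n + 1) := by
  have hz := fun n => mem_iInter.1 hz₀ n
  have hz₀V' : z₀ ∈ V' := (hz 0).1
  -- The Huygens set
  set S : Set ℝ := {ρ : ℝ | 0 < ρ ∧ ∀ z ∈ V', Metric.ball z ρ ⊆ V} with hSdef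
  have hδ' : ε ≤ sSup S := hδ
  have hSne : S.Nonempty := by
    by_contra hcon
    rw [Set.not_nonempty_iff_eq_empty] at hcon
    rw [hcon, Real.sSup_empty] at hδ'
    linarith
  -- any point within ε of z₀ lies in V
  have hV_of : ∀ w : ℂ, dist w z₀ ≤ ε → w ∈ V := by
    intro w hw
    rcases eq_or_ne w z₀ with rfl | hne
    · exact hV'V hz₀V'
    have hd0 : 0 < dist w z₀ := dist_pos.2 hne
    obtain ⟨s, hs0, hsV'⟩ := Metric.isOpen_iff.1 hV' z₀ hz₀V'
    set d := dist w z₀ with hddef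
    set t : ℝ := min (1 / 2) (s / (2 * d)) with htdef
    have ht0 : 0 < t := lt_min (by norm_num) (by positivity)
    have ht1 : t < 1 := lt_of_le_of_lt (min_le_left _ _) (by norm_num)
    set z₁ : ℂ := z₀ + (t : ℝ) • (w - z₀) with hz₁def
    have hz₁V' : z₁ ∈ V' := by
      apply hsV'
      have h1 : dist z₁ z₀ = t * d := by
        rw [hz₁def, dist_eq_norm, add_sub_cancel_left, norm_smul, Real.norm_eq_abs,
          abs_of_pos ht0, hddef, dist_eq_norm]
      rw [mem_ball, h1]
      calc t * d ≤ (s / (2 * d)) * d := mul_le_mul_of_nonneg_right (min_le_right _ _) hd0.le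
        _ = s / 2 := by field_simp
        _ < s := by linarith
    have hwz₁ : dist w z₁ = (1 - t) * d := by
      have h1 : w - z₁ = (1 - t) • (w - z₀) := by
        rw [hz₁def, sub_smul, one_smul]
        abel
      rw [dist_eq_norm, h1, norm_smul, Real.norm_eq_abs, abs_of_pos (by linarith : (0:ℝ) < 1 - t),
        hddef, dist_eq_norm]
    have hlt : dist w z₁ < ε := by
      rw [hwz₁]
      nlinarith
    obtain ⟨ρ', hρ'S, hρ'lt⟩ := exists_lt_of_lt_csSup hSne (lt_of_lt_of_le hlt hδ')
    exact hρ'S.2 z₁ hz₁V' (mem_ball.2 hρ'lt)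
  -- the closed ball of radius ε rₙ around z₀ lies in the n-th sheet
  have hsheet : ∀ n, Metric.closedBall z₀ (ε * r n) ⊆ perfSheet V P r n := by
    intro n w hw
    have hwz : dist w z₀ ≤ ε * r n := mem_closedBall.1 hw
    constructor
    · exact hV_of w (hwz.trans (by nlinarith [hr1 n, hr0 n]))
    · intro hmem
      rw [mem_iUnion₂] at hmem
      obtain ⟨q, hq, hb⟩ := hmem
      have hz₀q : lam * r n ≤ dist z₀ q := by
        by_contra hcon
        push_neg at hcon
        exact (hz n).2 (mem_iUnion₂.2 ⟨q, hq, mem_ball.2 hcon⟩)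
      have hwq : dist w q < r n := mem_ball.1 hb
      have htri := dist_triangle z₀ w q
      rw [dist_comm z₀ w] at htri
      rw [hlam] at hz₀q
      nlinarith [hr0 n]
  -- Cauchy estimates on each sheet
  have hder : ∀ n, ‖iteratedDeriv m (f n) z₀‖ ≤
      (Nat.factorial m : ℝ) * (A * ρ ^ (n + 1)) / (ε * r n) ^ m := by
    intro n
    obtain ⟨O, hO, hOs, hOd⟩ := hf n
    exact cauchy_deriv_bound (mul_pos hε (hr0 n)) (hOd.mono ((hsheet n).trans hOs))
      (fun z hzb => hbound n z (hsheet n hzb)) m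
  set C : ℝ := A * (Nat.factorial m : ℝ) / (c ^ m * ε ^ m) with hCdef
  set g : ℕ → ℝ := fun n => ((n : ℝ) + 1) ^ (α * (m : ℝ)) * ρ ^ (n + 1) with hgdef
  have hterm : ∀ n, ‖iteratedDeriv m (f n) z₀‖ ≤ C * g n := by
    intro n
    have hrpos : (0 : ℝ) < (n : ℝ) + 1 := by positivity
    have hrp : (0 : ℝ) < ((n : ℝ) + 1) ^ α := Real.rpow_pos_of_pos hrpos α
    have h1 : c ≤ r n * ((n : ℝ) + 1) ^ α := by
      have := hdioph n
      rw [div_le_iff₀ hrp] at this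
      exact this
    have hkey : c * ε ≤ ε * r n * ((n : ℝ) + 1) ^ α := by nlinarith
    have hexp : ((n : ℝ) + 1) ^ (α * (m : ℝ)) = (((n : ℝ) + 1) ^ α) ^ m := by
      rw [← Real.rpow_natCast (((n : ℝ) + 1) ^ α) m, ← Real.rpow_mul hrpos.le]
    have hkeym : c ^ m * ε ^ m ≤ (ε * r n) ^ m * ((n : ℝ) + 1) ^ (α * (m : ℝ)) := by
      rw [hexp, ← mul_pow, ← mul_pow]
      exact pow_le_pow_left₀ (by positivity) hkey m
    have hinv : ((ε * r n) ^ m)⁻¹ ≤ ((n : ℝ) + 1) ^ (α * (m : ℝ)) / (c ^ m * ε ^ m) := by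
      rw [inv_eq_one_div, div_le_div_iff₀ (pow_pos (mul_pos hε (hr0 n)) m) (by positivity), one_mul]
      nlinarith [hkeym]
    calc ‖iteratedDeriv m (f n) z₀‖
        ≤ (Nat.factorial m : ℝ) * (A * ρ ^ (n + 1)) / (ε * r n) ^ m := hder n
      _ = ((Nat.factorial m : ℝ) * (A * ρ ^ (n + 1))) * ((ε * r n) ^ m)⁻¹ := by ring
      _ ≤ ((Nat.factorial m : ℝ) * (A * ρ ^ (n + 1))) *
            (((n : ℝ) + 1) ^ (α * (m : ℝ)) / (c ^ m * ε ^ m)) :=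
          mul_le_mul_of_nonneg_left hinv (by positivity)
      _ = C * g n := by rw [hCdef, hgdef]; ring
  -- summability of the majorant series
  have hS2 : Summable g := by
    set k := Nat.ceil (α * (m : ℝ)) with hkdef
    have hgeo : Summable (fun n : ℕ => ((n : ℝ)) ^ k * ρ ^ n) := by
      have := summable_pow_mul_geometric_of_norm_lt_one (R := ℝ) (r := ρ) k
        (by rwa [Real.norm_eq_abs, abs_of_pos hρ0])
      exact this
    have hshift : Summable (fun n : ℕ => ((n : ℝ) + 1) ^ k * ρ ^ (n + 1)) := by
      have := (summable_nat_add_iff (f := fun n : ℕ => ((n : ℝ)) ^ k * ρ ^ n) 1).2 hgeo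
      simpa [Nat.cast_add] using this
    refine Summable.of_nonneg_of_le (fun n => by positivity) (fun n => ?_) hshift
    have h1 : ((n : ℝ) + 1) ^ (α * (m : ℝ)) ≤ ((n : ℝ) + 1) ^ k := by
      have := Real.rpow_le_rpow_of_exponent_le
        (by linarith [Nat.cast_nonneg (α := ℝ) n] : (1 : ℝ) ≤ (n : ℝ) + 1)
        (Nat.le_ceil (α * (m : ℝ)))
      rwa [Real.rpow_natCast] at this
    exact mul_le_mul_of_nonneg_right h1 (by positivity)
  have hS1 : Summable (fun n => ‖iteratedDeriv m (f n) z₀‖) :=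
    Summable.of_nonneg_of_le (fun n => norm_nonneg _) hterm (hS2.mul_left C)
  refine ⟨hS1, hS2, ?_⟩
  have h1 : ‖∑' n, iteratedDeriv m (f n) z₀‖ ≤
      ∑' n, ‖iteratedDeriv m (f n) z₀‖ := by
    have := norm_tsum_le_tsum_norm (f := fun n => iteratedDeriv m (f n) z₀)
      (by simpa using hS1)
    simpa using this
  have h2 : (∑' n, ‖iteratedDeriv m (f n) z₀‖) ≤ ∑' n, C * g n :=
    Summable.tsum_le_tsum hterm hS1 (hS2.mul_left C)
  calc ‖∑' n, iteratedDeriv m (f n) z₀‖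
      ≤ ∑' n, C * g n := h1.trans h2
    _ = C * ∑' n, g n := tsum_mul_left
    _ = A * (Nat.factorial m : ℝ) / (c ^ m * ε ^ m) *
        ∑' n : ℕ, ((n : ℝ) + 1) ^ (α * (m : ℝ)) * ρ ^ (n + 1) := by rw [hCdef]
end

section
/- Fix ε > 0 and set λ := 1 + ε. For each integer n ≥ 1 let Pₙ ⊆ ℂ and let 0 < rₙ ≤ 1 satisfy rₙ ≥ c/n^α for some c > 0, α > 0. Let V ⊆ ℂ be open and suppose fₙ is holomorphic on an open set containing Vₙ(r) := V \ ⋃_{p∈Pₙ} D(p, rₙ) with sup_{z ∈ Vₙ(r)} |fₙ(z)| ≤ A·ρⁿ for constants A > 0 and 0 < ρ < 1. Let V' ⊆ V be open with δ(V',V) ≥ ε and let z₀ ∈ ⋂_{n≥1} V'ₙ(λr). Then the sum function is of Gevrey class α at z₀: there exists K > 0 such that for every integer m ≥ 1, |Σ_{n≥1} fₙ^{(m)}(z₀)| ≤ K^{m+1} · m! · m^{α m}. -/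
set_option maxHeartbeats 1000000


open Metric Set

lemma cauchy_est {f : ℂ → ℂ} {c : ℂ} {R M : ℝ} (hR : 0 < R)
    (hf : DifferentiableOn ℂ f (Metric.closedBall c R))
    (hb : ∀ z ∈ Metric.closedBall c R, ‖f z‖ ≤ M) (m : ℕ) :
    ‖iteratedDeriv m f c‖ ≤ (Nat.factorial m : ℝ) * M / R ^ m := by
  set R' : NNReal := ⟨R, hR.le⟩ with hR'def
  have h : HasFPowerSeriesOnBall f (cauchyPowerSeries f c R') c R' :=
    DifferentiableOn.hasFPowerSeriesOnBall hf (NNReal.coe_pos.mp hR)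
  set p := cauchyPowerSeries f c R' with hp
  have key := h.factorial_smul (1 : ℂ) m
  have hiter : iteratedDeriv m f c = (m.factorial : ℂ) • p m (fun _ ↦ 1) := by
    rw [Nat.cast_smul_eq_nsmul, key, iteratedDeriv_eq_iteratedFDeriv]
  have h1 : ‖p m (fun _ ↦ (1:ℂ))‖ ≤ ‖p m‖ := by
    have := (p m).le_opNorm (fun _ ↦ (1:ℂ))
    simpa using this
  have hc1 : Continuous fun θ : ℝ => f (circleMap c R θ) := by
    rw [← continuousOn_univ]
    exact hf.continuousOn.comp (continuous_circleMap c R).continuousOn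
      fun θ _ => sphere_subset_closedBall (circleMap_mem_sphere c hR.le θ)
  have hIle : (∫ θ in (0:ℝ)..2 * Real.pi, ‖f (circleMap c R θ)‖) ≤ 2 * Real.pi * M := by
    calc (∫ θ in (0:ℝ)..2 * Real.pi, ‖f (circleMap c R θ)‖)
        ≤ ∫ _ in (0:ℝ)..2 * Real.pi, M := by
          apply intervalIntegral.integral_mono_on Real.two_pi_pos.le
            (hc1.norm.intervalIntegrable _ _) (intervalIntegrable_const)
          intro θ _
          exact hb _ (sphere_subset_closedBall (circleMap_mem_sphere c hR.le θ))
      _ = 2 * Real.pi * M := by simp [mul_comm]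
  have h2 : ‖p m‖ ≤ M * (R ^ m)⁻¹ := by
    have := norm_cauchyPowerSeries_le f c R m
    have habs : |R| = R := abs_of_pos hR
    calc ‖p m‖ ≤ ((2 * Real.pi)⁻¹ * ∫ θ : ℝ in (0)..2 * Real.pi, ‖f (circleMap c R θ)‖) * |R|⁻¹ ^ m := this
      _ ≤ ((2 * Real.pi)⁻¹ * (2 * Real.pi * M)) * |R|⁻¹ ^ m := by
          gcongr
      _ = M * (R ^ m)⁻¹ := by
          rw [habs, inv_mul_cancel_left₀ Real.two_pi_pos.ne', inv_pow]
  rw [hiter, norm_smul, Complex.norm_natCast, div_eq_mul_inv, mul_assoc]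
  exact mul_le_mul_of_nonneg_left (h1.trans h2) (by positivity)

lemma rpow_mul_exp_le {x β L : ℝ} (hx : 0 < x) (hβ : 0 < β) (hL : 0 < L) :
    x ^ β * Real.exp (-(L * x)) ≤ (β / L) ^ β := by
  have ha : 0 < β / L := by positivity
  have hlog : Real.log x ≤ x * L / β - 1 + Real.log (β / L) := by
    have h1 : Real.log (x / (β / L)) ≤ x / (β / L) - 1 :=
      Real.log_le_sub_one_of_pos (by positivity)
    rw [Real.log_div hx.ne' ha.ne'] at h1
    have : x / (β / L) = x * L / β := by field_simp
    rw [this] at h1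
    linarith
  have hkey : β * Real.log x + -(L * x) ≤ β * Real.log (β / L) := by
    have := mul_le_mul_of_nonneg_left hlog hβ.le
    have h2 : β * (x * L / β) = L * x := by field_simp
    nlinarith
  calc x ^ β * Real.exp (-(L * x))
      = Real.exp (β * Real.log x + -(L * x)) := by
        rw [Real.rpow_def_of_pos hx, Real.exp_add, mul_comm (Real.log x) β]
    _ ≤ Real.exp (β * Real.log (β / L)) := Real.exp_le_exp.mpr hkey
    _ = (β / L) ^ β := by rw [Real.rpow_def_of_pos ha, mul_comm]

/-- The Gevrey lemma: for a meandromorphic sequence (`|fₙ| ≤ A ρⁿ`) over an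
`(c,α)`-Diophantine perforation (`rₙ ≥ c/n^α`) with `δ(V',V) ≥ ε`, `λ = 1+ε`, the sum
function is of Gevrey class `α` at every point `z₀` of the residual set of the
`λr`-perforation of `V'`: there is `K > 0` with
`|Σₙ fₙ^{(m)}(z₀)| ≤ K^{m+1} m! m^{αm}` for all `m ≥ 1`. -/
theorem gevrey_lemma (ε : ℝ) (hε : 0 < ε) (lam : ℝ) (hlam : lam = 1 + ε)
    (P : ℕ → Set ℂ) (r : ℕ → ℝ) (hr0 : ∀ n, 0 < r n) (hr1 : ∀ n, r n ≤ 1)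
    (c α : ℝ) (hc : 0 < c) (hα : 0 < α)
    (hdioph : ∀ n : ℕ, c / ((n : ℝ) + 1) ^ α ≤ r n)
    (V : Set ℂ) (hV : IsOpen V) (f : ℕ → ℂ → ℂ)
    (hf : ∀ n, ∃ O : Set ℂ, IsOpen O ∧ perfSheet V P r n ⊆ O ∧ DifferentiableOn ℂ (f n) O)
    (A ρ : ℝ) (hA : 0 < A) (hρ0 : 0 < ρ) (hρ1 : ρ < 1)
    (hbound : ∀ n, ∀ z ∈ perfSheet V P r n, ‖f n z‖ ≤ A * ρ ^ (n + 1))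
    (V' : Set ℂ) (hV' : IsOpen V') (hV'V : V' ⊆ V) (hδ : ε ≤ huygens V' V)
    (z₀ : ℂ) (hz₀ : z₀ ∈ ⋂ n, perfSheet V' P (fun i => lam * r i) n) :
    ∃ K : ℝ, 0 < K ∧ ∀ m : ℕ, 1 ≤ m →
      ‖∑' n, iteratedDeriv m (f n) z₀‖ ≤
        K ^ (m + 1) * (Nat.factorial m : ℝ) * (m : ℝ) ^ (α * (m : ℝ)) := by
  -- basic constants
  set σ := Real.sqrt ρ with hσdef
  have hσ0 : 0 < σ := Real.sqrt_pos.mpr hρ0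
  have hσ1 : σ < 1 := by
    rw [hσdef, show (1:ℝ) = Real.sqrt 1 by simp]
    exact Real.sqrt_lt_sqrt hρ0.le hρ1
  have hσρ : σ * σ = ρ := Real.mul_self_sqrt hρ0.le
  set L : ℝ := -Real.log σ with hLdef
  have hL : 0 < L := by
    have := Real.log_neg hσ0 hσ1
    simp [hLdef]; linarith
  have hexp : ∀ k : ℕ, σ ^ k = Real.exp (-(L * k)) := by
    intro k
    rw [hLdef, neg_mul, neg_neg, mul_comm, Real.exp_nat_mul, Real.exp_log hσ0]
  -- huygens ball property
  have hball : ∀ z ∈ V', Metric.ball z (3 * ε / 4) ⊆ V := by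
    intro z hz
    by_contra hnot
    have hle : huygens V' V ≤ 3 * ε / 4 := by
      apply Real.sSup_le _ (by positivity)
      intro ρ' hρ'
      by_contra hgt
      push_neg at hgt
      exact hnot ((Metric.ball_subset_ball hgt.le).trans (hρ'.2 z hz))
    linarith [lt_of_lt_of_le (by linarith : (3:ℝ) * ε / 4 < ε) hδ]
  -- the good radius
  set R : ℕ → ℝ := fun n => ε * r n / 2 with hRdef
  have hRpos : ∀ n, 0 < R n := fun n => by
    have := hr0 n; simp only [hRdef]; positivity
  have hsheet : ∀ n, Metric.closedBall z₀ (R n) ⊆ perfSheet V P r n := by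
    intro n z hz
    have hz₀n := mem_iInter.mp hz₀ n
    simp only [perfSheet, mem_diff, mem_iUnion, exists_prop, not_exists, not_and] at hz₀n ⊢
    obtain ⟨hz₀V', hz₀P⟩ := hz₀n
    have hdzz : dist z z₀ ≤ R n := mem_closedBall.mp hz
    have hrn0 := hr0 n; have hrn1 := hr1 n
    constructor
    · apply hball z₀ hz₀V'
      rw [mem_ball]
      calc dist z z₀ ≤ R n := hdzz
        _ < 3 * ε / 4 := by rw [hRdef]; nlinarith
    · intro p hp hmem
      apply hz₀P p hp
      rw [mem_ball] at hmem ⊢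
      calc dist z₀ p ≤ dist z₀ z + dist z p := dist_triangle _ _ _
        _ < R n + r n := by rw [dist_comm]; exact add_lt_add_of_le_of_lt hdzz hmem
        _ ≤ lam * r n := by rw [hRdef, hlam]; nlinarith
  -- Cauchy estimate for each n
  have est : ∀ m n : ℕ, ‖iteratedDeriv m (f n) z₀‖ ≤
      (Nat.factorial m : ℝ) * (A * ρ ^ (n + 1)) / R n ^ m := by
    intro m n
    obtain ⟨O, hO, hPO, hfO⟩ := hf n
    refine cauchy_est (hRpos n) (hfO.mono ((hsheet n).trans hPO)) ?_ m
    intro z hz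
    exact hbound n z (hsheet n hz)
  -- constants
  set C2 : ℝ := 2 / (ε * c) with hC2def
  have hC2 : 0 < C2 := by positivity
  set B : ℝ := (α / L) ^ α with hBdef
  have hB : 0 < B := Real.rpow_pos_of_pos (by positivity) α
  set S : ℝ := (1 - σ)⁻¹ with hSdef
  have hS : 0 < S := by rw [hSdef]; exact inv_pos.mpr (by linarith)
  set K : ℝ := max 1 (max (A * S) (C2 * B)) with hKdef
  have hK : 0 < K := lt_of_lt_of_le one_pos (le_max_left _ _)
  refine ⟨K, hK, ?_⟩
  intro m hm
  have hm0 : (0:ℝ) < m := by exact_mod_cast hm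
  set β : ℝ := α * m with hβdef
  have hβ : 0 < β := by positivity
  -- the key pointwise bound
  set D : ℝ := (Nat.factorial m : ℝ) * A * C2 ^ m * B ^ m * (m : ℝ) ^ (α * (m:ℝ)) with hDdef
  have hD : 0 < D := by
    have h4 : (0:ℝ) < (Nat.factorial m : ℝ) := by exact_mod_cast m.factorial_pos
    have h5 : (0:ℝ) < (m : ℝ) ^ (α * (m:ℝ)) := Real.rpow_pos_of_pos hm0 _
    rw [hDdef]
    exact mul_pos (mul_pos (mul_pos (mul_pos h4 hA) (pow_pos hC2 m)) (pow_pos hB m)) h5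
  have hptwise : ∀ n : ℕ, ‖iteratedDeriv m (f n) z₀‖ ≤ (D * σ) * σ ^ n := by
    intro n
    refine (est m n).trans ?_
    set T : ℝ := ((n:ℝ) + 1) ^ α with hTdef
    have hT : 0 < T := Real.rpow_pos_of_pos (by positivity) α
    have hRT : (R n)⁻¹ ≤ C2 * T := by
      have h1 : ε * c / (2 * T) ≤ R n := by
        rw [hRdef]
        have := hdioph n
        rw [div_le_iff₀ (by positivity)] at this ⊢
        calc ε * c = ε * c := rfl
          _ ≤ ε * (r n * T) := by
              have : c ≤ r n * T := by
                have := hdioph n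
                rw [div_le_iff₀ hT] at this
                linarith
              nlinarith
          _ = ε * r n / 2 * (2 * T) := by ring
      have h2 : (R n)⁻¹ ≤ (ε * c / (2 * T))⁻¹ := by
        apply inv_anti₀ (by positivity) h1
      refine h2.trans (le_of_eq ?_)
      rw [hC2def]
      field_simp
    -- T^m * σ^(n+1) ≤ B^m * m^(α m)
    have hTm : T ^ m * σ ^ (n + 1) ≤ B ^ m * (m:ℝ) ^ (α * (m:ℝ)) := by
      have hx : (0:ℝ) < (n:ℝ) + 1 := by positivity
      have e1 : T ^ m = ((n:ℝ) + 1) ^ β := by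
        rw [hTdef, ← Real.rpow_natCast (((n:ℝ) + 1) ^ α) m, ← Real.rpow_mul hx.le, hβdef]
      have e2 : σ ^ (n + 1) = Real.exp (-(L * ((n:ℝ) + 1))) := by
        rw [hexp (n + 1)]; push_cast; ring_nf
      have e3 := rpow_mul_exp_le hx hβ hL
      have e4 : (β / L) ^ β = B ^ m * (m:ℝ) ^ (α * (m:ℝ)) := by
        have hdiv : 0 < α / L := by positivity
        have h6 : β / L = (α / L) * (m:ℝ) := by rw [hβdef]; ring
        rw [h6, hβdef, Real.mul_rpow hdiv.le hm0.le, hBdef,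
          ← Real.rpow_natCast ((α / L) ^ α) m, ← Real.rpow_mul hdiv.le]
      calc T ^ m * σ ^ (n + 1) = ((n:ℝ) + 1) ^ β * Real.exp (-(L * ((n:ℝ) + 1))) := by
            rw [e1, e2]
        _ ≤ (β / L) ^ β := e3
        _ = B ^ m * (m:ℝ) ^ (α * (m:ℝ)) := e4
    -- assemble
    have hρn : ρ ^ (n + 1) = σ ^ (n + 1) * σ ^ (n + 1) := by
      rw [← mul_pow, hσρ]
    calc (Nat.factorial m : ℝ) * (A * ρ ^ (n + 1)) / R n ^ m
        = (Nat.factorial m : ℝ) * A * ρ ^ (n + 1) * ((R n)⁻¹) ^ m := by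
          rw [inv_pow]; ring
      _ ≤ (Nat.factorial m : ℝ) * A * ρ ^ (n + 1) * (C2 * T) ^ m := by
          refine mul_le_mul_of_nonneg_left
            (pow_le_pow_left₀ (inv_pos.mpr (hRpos n)).le hRT m) ?_
          have hfm : (0:ℝ) ≤ (Nat.factorial m : ℝ) := Nat.cast_nonneg _
          positivity
      _ = (Nat.factorial m : ℝ) * A * C2 ^ m * (T ^ m * σ ^ (n + 1)) * σ ^ (n + 1) := by
          rw [hρn, mul_pow]; ring
      _ ≤ (Nat.factorial m : ℝ) * A * C2 ^ m * (B ^ m * (m:ℝ) ^ (α * (m:ℝ))) * σ ^ (n + 1) := by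
          refine mul_le_mul_of_nonneg_right (mul_le_mul_of_nonneg_left hTm ?_)
            (pow_nonneg hσ0.le _)
          have hfm : (0:ℝ) ≤ (Nat.factorial m : ℝ) := Nat.cast_nonneg _
          positivity
      _ = (D * σ) * σ ^ n := by rw [hDdef, pow_succ]; ring
  -- summability
  have hmaj : Summable (fun n : ℕ => (D * σ) * σ ^ n) :=
    (summable_geometric_of_lt_one hσ0.le hσ1).mul_left _
  have hgsum : Summable (fun n : ℕ => ‖iteratedDeriv m (f n) z₀‖) :=
    Summable.of_nonneg_of_le (fun n => norm_nonneg _) hptwise hmaj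
  -- final bound
  calc ‖∑' n, iteratedDeriv m (f n) z₀‖ ≤ ∑' n, ‖iteratedDeriv m (f n) z₀‖ :=
        norm_tsum_le_tsum_norm hgsum
    _ ≤ ∑' n : ℕ, (D * σ) * σ ^ n := Summable.tsum_le_tsum hptwise hgsum hmaj
    _ = (D * σ) * (1 - σ)⁻¹ := by
        rw [tsum_mul_left, tsum_geometric_of_lt_one hσ0.le hσ1]
    _ ≤ D * S := by
        rw [hSdef]
        refine mul_le_mul_of_nonneg_right ?_ hS.le
        nlinarith [hD, hσ1]
    _ = (A * S) * (C2 * B) ^ m * ((Nat.factorial m : ℝ) * (m : ℝ) ^ (α * (m:ℝ))) := by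
        rw [hDdef, mul_pow]; ring
    _ ≤ K * K ^ m * ((Nat.factorial m : ℝ) * (m : ℝ) ^ (α * (m:ℝ))) := by
        refine mul_le_mul_of_nonneg_right ?_ ?_
        · refine mul_le_mul ((le_max_left _ _).trans (le_max_right _ _))
            (pow_le_pow_left₀ (mul_pos hC2 hB).le
              ((le_max_right _ _).trans (le_max_right _ _)) m)
            (pow_nonneg (mul_pos hC2 hB).le m) hK.le
        · have h5 : (0:ℝ) < (m : ℝ) ^ (α * (m:ℝ)) := Real.rpow_pos_of_pos hm0 _
          have hfm : (0:ℝ) ≤ (Nat.factorial m : ℝ) := Nat.cast_nonneg _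
          positivity
    _ = K ^ (m + 1) * (Nat.factorial m : ℝ) * (m : ℝ) ^ (α * (m:ℝ)) := by
        rw [pow_succ]; ring
end

section
/- Let I ⊆ ℝ be an open interval of length strictly greater than π and let Σ := {t·e^{iφ} : 0 < t < 1, φ ∈ I} be the corresponding open sector of the unit disc. If f is holomorphic on Σ and there exist constants A, B > 0 with |f(z)| ≤ A·exp(−B/|z|) for all z ∈ Σ, then f is identically zero on Σ (Watson's lemma). -/
open Complex Set Filter Real Topology

private lemma watson_abs_aux (ζ : ℂ) (h : 0 ≤ (Complex.exp ζ).re) :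
    Real.exp ζ.re ≤ ‖Complex.exp ζ + 2‖ := by
  set v := Complex.exp ζ with hv
  have h1 : ‖v‖ = Real.exp ζ.re := Complex.norm_exp ζ
  have h2 : (‖v + 2‖) ^ 2 = (v.re + 2) ^ 2 + v.im ^ 2 := by
    rw [Complex.sq_norm, Complex.normSq_apply]
    simp [Complex.add_re, Complex.add_im]
    ring
  have h3 : (‖v‖) ^ 2 = v.re ^ 2 + v.im ^ 2 := by
    rw [Complex.sq_norm, Complex.normSq_apply]; ring
  nlinarith [norm_nonneg (v + 2), norm_nonneg v, h1 ▸ Real.exp_pos ζ.re]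

/-- Watson's lemma: a holomorphic function on an open sector of the unit disc of opening
angle `> π` which satisfies `|f(z)| ≤ A exp(−B/|z|)` is identically zero. -/
theorem watson_lemma (a b : ℝ) (hab : Real.pi < b - a) (S : Set ℂ)
    (hS : S = {z : ℂ | ∃ t φ : ℝ, 0 < t ∧ t < 1 ∧ φ ∈ Set.Ioo a b ∧
      z = (t : ℂ) * Complex.exp (φ * Complex.I)})
    (f : ℂ → ℂ) (hf : DifferentiableOn ℂ f S)
    (A B : ℝ) (hA : 0 < A) (hB : 0 < B)
    (hbound : ∀ z ∈ S, ‖f z‖ ≤ A * Real.exp (-B / ‖z‖)) :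
    ∀ z ∈ S, f z = 0 := by
  have hπ := Real.pi_pos
  set θ : ℝ := (a + b) / 2 with hθ
  -- membership of inverted points
  have hSmem : ∀ u : ℂ, 2 < u.re → Complex.exp (θ * I) / u ∈ S := by
    intro u hu
    have hu0 : u ≠ 0 := by
      intro h; rw [h] at hu; simp at hu; linarith
    have habs : 2 < ‖u‖ := lt_of_lt_of_le hu (Complex.re_le_norm u)
    have habs0 : (0:ℝ) < ‖u‖ := by linarith
    have harg : |Complex.arg u| < π / 2 :=
      Complex.abs_arg_lt_pi_div_two_iff.mpr (Or.inl (by linarith))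
    rw [abs_lt] at harg
    rw [hS]
    refine ⟨(‖u‖)⁻¹, θ - Complex.arg u, by positivity, ?_, ⟨?_, ?_⟩, ?_⟩
    · rw [inv_lt_one_iff₀]; right; linarith
    · linarith
    · linarith
    · rw [div_eq_iff hu0]
      push_cast
      rw [sub_mul, Complex.exp_sub]
      have := Complex.norm_mul_exp_arg_mul_I u
      field_simp
      rw [eq_div_iff (by exact_mod_cast habs0.ne'), mul_comm, mul_comm I]
      exact this
  -- core: f vanishes on a ray segment
  have hray : ∀ t : ℝ, 0 < t → t < 4⁻¹ → f ((t : ℂ) * Complex.exp (θ * I)) = 0 := by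
    set e : ℂ := Complex.exp ((θ : ℝ) * I) with he
    have habse : ‖e‖ = 1 := by
      rw [he, Complex.norm_exp]; simp
    intro t ht0 ht1
    set c : ℝ := 1 / t - 2 with hc
    have hc2 : 2 < c := by
      rw [hc]
      have : 4 < 1 / t := by
        rw [lt_div_iff₀ ht0]; nlinarith
      linarith
    have hc0 : 0 < c := by linarith
    -- facts about strip points
    have hstrip : ∀ ζ : ℂ, |ζ.im| < π / 2 → 0 < (Complex.exp ζ).re := by
      intro ζ hζ
      rw [Complex.exp_re]
      have := abs_lt.mp hζ
      exact mul_pos (Real.exp_pos _) (Real.cos_pos_of_mem_Ioo ⟨by linarith, this.2⟩)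
    have hre2 : ∀ ζ : ℂ, |ζ.im| < π / 2 → 2 < (Complex.exp ζ + 2).re := by
      intro ζ hζ
      have := hstrip ζ hζ
      simp only [Complex.add_re]
      norm_num
      linarith
    have hmemS : ∀ ζ : ℂ, |ζ.im| < π / 2 → e / (Complex.exp ζ + 2) ∈ S := fun ζ hζ =>
      hSmem _ (hre2 ζ hζ)
    have hne : ∀ ζ : ℂ, |ζ.im| < π / 2 → Complex.exp ζ + 2 ≠ 0 := by
      intro ζ hζ h0
      have := hre2 ζ hζ
      rw [h0] at this
      simp at this; linarith
    -- the key quantitative estimate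
    have key : ∀ s : ℝ, B < s → ‖f ((t : ℂ) * e)‖ ≤ A * Real.exp (-(s * c)) := by
      intro s hs
      have hs0 : 0 < s := hB.trans hs
      set β := Real.arccos (B / s) with hβ
      have hBs0 : 0 < B / s := div_pos hB hs0
      have hBs1 : B / s < 1 := (div_lt_one hs0).mpr hs
      have hβ0 : 0 < β := Real.arccos_pos.mpr hBs1
      have hβπ : β < π / 2 := Real.arccos_lt_pi_div_two.mpr hBs0
      have hcosβ : Real.cos β = B / s := Real.cos_arccos (by linarith) hBs1.le
      set G : ℂ → ℂ := fun ζ => f (e / (Complex.exp ζ + 2)) * Complex.exp (s * Complex.exp ζ)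
        with hG
      -- master norm bound
      have hGnorm : ∀ ζ : ℂ, |ζ.im| < π / 2 → ‖G ζ‖ ≤
          A * Real.exp (-B * ‖Complex.exp ζ + 2‖ + s * (Complex.exp ζ).re) := by
        intro ζ hζ
        have hu0 : (0 : ℝ) < ‖Complex.exp ζ + 2‖ := by
          have := hre2 ζ hζ
          have h' := Complex.re_le_norm (Complex.exp ζ + 2)
          linarith
        have habsz : ‖e / (Complex.exp ζ + 2)‖ = (‖Complex.exp ζ + 2‖)⁻¹ := by
          rw [norm_div, habse, one_div]
        have h1 : ‖f (e / (Complex.exp ζ + 2))‖ ≤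
            A * Real.exp (-B * ‖Complex.exp ζ + 2‖) := by
          have := hbound _ (hmemS ζ hζ)
          have harg : -B / (‖Complex.exp ζ + 2‖)⁻¹ =
              -B * ‖Complex.exp ζ + 2‖ := by
            field_simp
          rwa [habsz, harg] at this
        have h2 : ‖Complex.exp ((s : ℂ) * Complex.exp ζ)‖ = Real.exp (s * (Complex.exp ζ).re) := by
          rw [Complex.norm_exp, Complex.re_ofReal_mul]
        rw [hG]
        simp only [norm_mul]
        rw [h2, Real.exp_add]
        have := Real.exp_pos (s * (Complex.exp ζ).re)
        calc ‖f (e / (Complex.exp ζ + 2))‖ * Real.exp (s * (Complex.exp ζ).re)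
            ≤ (A * Real.exp (-B * ‖Complex.exp ζ + 2‖)) *
              Real.exp (s * (Complex.exp ζ).re) := by
              apply mul_le_mul_of_nonneg_right h1 this.le
          _ = A * (Real.exp (-B * ‖Complex.exp ζ + 2‖) *
              Real.exp (s * (Complex.exp ζ).re)) := by ring
      -- differentiability
      set V : Set ℂ := Complex.im ⁻¹' Set.Ioo (-(π / 2)) (π / 2) with hV
      have hVopen : IsOpen V := isOpen_Ioo.preimage Complex.continuous_im
      have hVmem : ∀ ζ ∈ V, |ζ.im| < π / 2 := fun ζ h => abs_lt.mpr ⟨h.1, h.2⟩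
      have hGdiff : DifferentiableOn ℂ G V := by
        apply DifferentiableOn.mul
        · have hgd : DifferentiableOn ℂ (fun ζ : ℂ => e / (Complex.exp ζ + 2)) V := by
            apply DifferentiableOn.div (differentiableOn_const e)
            · exact (Complex.differentiable_exp.add_const 2).differentiableOn
            · exact fun ζ hζ => hne ζ (hVmem ζ hζ)
          exact hf.comp hgd fun ζ hζ => hmemS ζ (hVmem ζ hζ)
        · apply Differentiable.differentiableOn
          exact (Complex.differentiable_exp.const_mul _).cexp
      set St : Set ℂ := Complex.im ⁻¹' Set.Ioo (-β) β with hSt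
      have hsub : St ⊆ V := fun ζ h => ⟨by have := h.1; linarith,
        by have := h.2; linarith⟩
      have hclsub : closure St ⊆ V := by
        have h1 : closure St ⊆ Complex.im ⁻¹' Set.Icc (-β) β :=
          closure_minimal (fun ζ h => ⟨h.1.le, h.2.le⟩) (isClosed_Icc.preimage Complex.continuous_im)
        intro ζ hζ
        have := h1 hζ
        exact ⟨by have := this.1; linarith, by have := this.2; linarith⟩
      have hfd : DiffContOnCl ℂ G St := ⟨hGdiff.mono hsub, hGdiff.continuousOn.mono hclsub⟩
      -- boundary bound
      have hbdry : ∀ ζ : ℂ, |ζ.im| = β → ‖G ζ‖ ≤ A := by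
        intro ζ hζ
        have hζ' : |ζ.im| < π / 2 := by rw [hζ]; exact hβπ
        have h0 : 0 < (Complex.exp ζ).re := hstrip ζ hζ'
        have haux : Real.exp ζ.re ≤ ‖Complex.exp ζ + 2‖ := watson_abs_aux ζ h0.le
        have hcos : Real.cos ζ.im = B / s := by
          rw [← Real.cos_abs, hζ, hcosβ]
        have hexp_re : (Complex.exp ζ).re = Real.exp ζ.re * (B / s) := by
          rw [Complex.exp_re, hcos]
        have hExp : -B * ‖Complex.exp ζ + 2‖ + s * (Complex.exp ζ).re ≤ 0 := by
          rw [hexp_re]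
          have : s * (Real.exp ζ.re * (B / s)) = B * Real.exp ζ.re := by
            field_simp
          rw [this]
          nlinarith
        calc ‖G ζ‖ ≤ A * Real.exp (-B * ‖Complex.exp ζ + 2‖ + s * (Complex.exp ζ).re) :=
              hGnorm ζ hζ'
          _ ≤ A * Real.exp 0 := by
              apply mul_le_mul_of_nonneg_left _ hA.le
              exact Real.exp_le_exp.mpr hExp
          _ = A := by simp
      -- growth bound
      have hgrowth : ∃ c' < π / (β - -β), ∃ B', G =O[comap (_root_.abs ∘ Complex.re) atTop ⊓ 𝓟 St]
          fun ζ => Real.exp (B' * Real.exp (c' * |ζ.re|)) := by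
        refine ⟨1, ?_, s, ?_⟩
        · rw [sub_neg_eq_add, lt_div_iff₀ (by linarith)]
          linarith
        · apply Asymptotics.IsBigO.of_bound A
          apply Filter.eventually_inf_principal.mpr
          apply Filter.Eventually.of_forall
          intro ζ hζ
          have hζ' : |ζ.im| < π / 2 := hVmem ζ (hsub hζ)
          have h1 := hGnorm ζ hζ'
          have h2 : -B * ‖Complex.exp ζ + 2‖ + s * (Complex.exp ζ).re ≤
              s * Real.exp (1 * |ζ.re|) := by
            have ha1 : 0 ≤ B * ‖Complex.exp ζ + 2‖ := by positivity
            have ha2 : (Complex.exp ζ).re ≤ Real.exp ζ.re := by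
              calc (Complex.exp ζ).re ≤ ‖Complex.exp ζ‖ := Complex.re_le_norm _
                _ = Real.exp ζ.re := Complex.norm_exp ζ
            have ha3 : Real.exp ζ.re ≤ Real.exp (1 * |ζ.re|) := by
              rw [one_mul]
              exact Real.exp_le_exp.mpr (le_abs_self _)
            nlinarith [Real.exp_pos ζ.re]
          rw [Real.norm_eq_abs, abs_of_pos (Real.exp_pos _)]
          calc ‖G ζ‖ ≤ A * Real.exp (-B * ‖Complex.exp ζ + 2‖ + s * (Complex.exp ζ).re) := h1
            _ ≤ A * Real.exp (s * Real.exp (1 * |ζ.re|)) := by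
                exact mul_le_mul_of_nonneg_left (Real.exp_le_exp.mpr h2) hA.le
      -- apply Phragmen-Lindelof
      set x : ℝ := Real.log c with hx
      have hGx : ‖G ((x : ℝ) : ℂ)‖ ≤ A := by
        apply PhragmenLindelof.horizontal_strip hfd hgrowth
        · intro ζ hζ
          exact hbdry ζ (by rw [hζ]; rw [abs_of_neg (by linarith)]; ring)
        · intro ζ hζ
          exact hbdry ζ (by rw [hζ, abs_of_pos hβ0])
        · simp; linarith
        · simp; linarith
      -- extract the bound
      have hexpx : Complex.exp ((x : ℝ) : ℂ) = (c : ℂ) := by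
        rw [← Complex.ofReal_exp, hx, Real.exp_log hc0]
      have hGxval : G ((x : ℝ) : ℂ) = f ((t : ℂ) * e) * Complex.exp ((s * c : ℝ) : ℂ) := by
        rw [hG]
        simp only
        rw [hexpx]
        congr 1
        · congr 1
          have ht0' : (t : ℂ) ≠ 0 := by
            simp only [ne_eq, Complex.ofReal_eq_zero]
            exact ht0.ne'
          have hct : (c : ℂ) + 2 = ((t : ℂ))⁻¹ := by
            rw [hc]; push_cast; rw [one_div]; ring
          rw [hct, div_eq_iff (inv_ne_zero ht0'), mul_comm ((t : ℂ)) e, mul_assoc,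
            mul_inv_cancel₀ ht0', mul_one]
        · push_cast; ring
      rw [hGxval] at hGx
      have hnormx : ‖f ((t : ℂ) * e) * Complex.exp ((s * c : ℝ) : ℂ)‖ =
          ‖f ((t : ℂ) * e)‖ * Real.exp (s * c) := by
        rw [norm_mul, Complex.norm_exp]
        simp
      rw [hnormx] at hGx
      have : ‖f ((t : ℂ) * e)‖ ≤ A / Real.exp (s * c) :=
        (le_div_iff₀ (Real.exp_pos _)).mpr hGx
      rw [Real.exp_neg, ← div_eq_mul_inv]
      exact this
    -- take the limit s → ∞
    have htends : Tendsto (fun s : ℝ => A * Real.exp (-(s * c))) atTop (𝓝 0) := by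
      have h1 : Tendsto (fun s : ℝ => s * c) atTop atTop := tendsto_id.atTop_mul_const hc0
      have h2 : Tendsto (fun s : ℝ => -(s * c)) atTop atBot := tendsto_neg_atTop_atBot.comp h1
      have h3 := Real.tendsto_exp_atBot.comp h2
      simpa using h3.const_mul A
    have hle : ‖f ((t : ℂ) * e)‖ ≤ 0 := by
      apply ge_of_tendsto htends
      filter_upwards [eventually_gt_atTop B] with s hs
      exact key s hs
    have := le_antisymm hle (norm_nonneg _)
    exact norm_eq_zero.mp this
  -- openness of S
  have hopen : IsOpen S := by
    rw [isOpen_iff_mem_nhds]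
    rintro z hz
    rw [hS] at hz
    obtain ⟨t, φ, ht0, ht1, hφ, rfl⟩ := hz
    set z : ℂ := (t : ℂ) * Complex.exp (φ * I) with hzdef
    have hw : z * Complex.exp (-φ * I) = (t : ℂ) := by
      rw [hzdef, mul_assoc, ← Complex.exp_add]
      push_cast; ring_nf
      simp
    have hargcont : ContinuousAt (fun z' : ℂ => φ + Complex.arg (z' * Complex.exp (-φ * I))) z := by
      apply ContinuousAt.add continuousAt_const
      have hmul : ContinuousAt (fun z' : ℂ => z' * Complex.exp (-φ * I)) z :=
        (continuous_id.mul continuous_const).continuousAt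
      have hca : ContinuousAt Complex.arg (z * Complex.exp (-φ * I)) := by
        rw [hw]
        exact Complex.continuousAt_arg (by simp [Complex.mem_slitPlane_iff]; positivity)
      exact ContinuousAt.comp (f := fun z' : ℂ => z' * Complex.exp (-φ * I)) hca hmul
    have hargval : φ + Complex.arg (z * Complex.exp (-φ * I)) = φ := by
      rw [hw, Complex.arg_ofReal_of_nonneg ht0.le, add_zero]
    have habs : ContinuousAt (fun z' : ℂ => ‖z'‖) z := continuous_norm.continuousAt
    have habsval : ‖z‖ ∈ Set.Ioo (0:ℝ) 1 := by
      rw [hzdef]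
      simp [Complex.norm_exp, abs_of_pos ht0]
      exact ⟨ht0, ht1⟩
    have h1 : ∀ᶠ z' in 𝓝 z, ‖z'‖ ∈ Set.Ioo (0:ℝ) 1 :=
      habs.eventually_mem (isOpen_Ioo.mem_nhds habsval)
    have h2 : ∀ᶠ z' in 𝓝 z, φ + Complex.arg (z' * Complex.exp (-φ * I)) ∈ Set.Ioo a b := by
      apply hargcont.eventually_mem
      rw [hargval]
      exact isOpen_Ioo.mem_nhds hφ
    rw [hS]
    filter_upwards [h1, h2] with z' hz1 hz2
    refine ⟨‖z'‖, φ + Complex.arg (z' * Complex.exp (-φ * I)), hz1.1, hz1.2, hz2, ?_⟩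
    have key := Complex.norm_mul_exp_arg_mul_I (z' * Complex.exp (-φ * I))
    have habseq : ‖z' * Complex.exp (-φ * I)‖ = ‖z'‖ := by
      simp [Complex.norm_exp]
    rw [habseq] at key
    calc z' = z' * (Complex.exp (-φ * I) * Complex.exp (φ * I)) := by
          rw [← Complex.exp_add]; simp
      _ = (z' * Complex.exp (-φ * I)) * Complex.exp (φ * I) := by ring
      _ = ((‖z'‖ : ℂ) * Complex.exp ((Complex.arg (z' * Complex.exp (-φ * I)) : ℝ) * I)) * Complex.exp (φ * I) := by rw [key]
      _ = (‖z'‖ : ℂ) * Complex.exp ((φ + Complex.arg (z' * Complex.exp (-φ * I)) : ℝ) * I) := by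
          push_cast
          rw [add_mul, Complex.exp_add]
          ring
  -- preconnectedness of S
  have hpre : IsPreconnected S := by
    have himg : S = (fun p : ℝ × ℝ => (p.1 : ℂ) * Complex.exp (p.2 * I)) ''
        (Set.Ioo (0:ℝ) 1 ×ˢ Set.Ioo a b) := by
      rw [hS]; ext z
      constructor
      · rintro ⟨t, φ, ht0, ht1, hφ, rfl⟩
        exact ⟨(t, φ), ⟨⟨ht0, ht1⟩, hφ⟩, rfl⟩
      · rintro ⟨⟨t, φ⟩, ⟨⟨ht0, ht1⟩, hφ⟩, rfl⟩
        exact ⟨t, φ, ht0, ht1, hφ, rfl⟩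
    rw [himg]
    apply (isPreconnected_Ioo.prod isPreconnected_Ioo).image
    apply Continuous.continuousOn
    exact (continuous_ofReal.comp continuous_fst).mul
      ((continuous_ofReal.comp continuous_snd).mul continuous_const).cexp
  -- identity theorem
  have han : AnalyticOnNhd ℂ f S := hf.analyticOnNhd hopen
  have hz₀ : ((8⁻¹ : ℝ) : ℂ) * Complex.exp (θ * I) ∈ S := by
    rw [hS]
    exact ⟨8⁻¹, θ, by norm_num, by norm_num, ⟨by rw [hθ]; linarith, by rw [hθ]; linarith⟩, rfl⟩
  have hfreq : ∃ᶠ z in 𝓝[≠] (((8⁻¹ : ℝ) : ℂ) * Complex.exp (θ * I)), f z = 0 := by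
    have htend : Tendsto (fun t : ℝ => (t : ℂ) * Complex.exp (θ * I)) (𝓝[<] (8⁻¹ : ℝ))
        (𝓝[≠] (((8⁻¹ : ℝ) : ℂ) * Complex.exp (θ * I))) := by
      apply tendsto_nhdsWithin_of_tendsto_nhds_of_eventually_within
      · exact ((continuous_ofReal.mul continuous_const).tendsto _).mono_left nhdsWithin_le_nhds
      · filter_upwards [self_mem_nhdsWithin] with t (ht : t < 8⁻¹)
        simp only [mem_compl_iff, mem_singleton_iff]
        intro hEq
        have := mul_right_cancel₀ (Complex.exp_ne_zero _) hEq
        exact absurd (Complex.ofReal_inj.mp this) (ne_of_lt ht)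
    apply htend.frequently
    have hev : ∀ᶠ t : ℝ in 𝓝[<] (8⁻¹ : ℝ), 0 < t ∧ t < 4⁻¹ := by
      filter_upwards [Ioo_mem_nhdsLT_of_mem (by norm_num : (8⁻¹:ℝ) ∈ Set.Ioc (0:ℝ) 8⁻¹)]
        with t ht
      exact ⟨ht.1, lt_trans ht.2 (by norm_num)⟩
    exact (hev.mono fun t ht => hray t ht.1 ht.2).frequently
  exact fun z hz => han.eqOn_zero_of_preconnected_of_frequently_eq_zero hpre hz₀ hfreq hz
end

section
/- For every integer n ≥ 0 and every z ∈ ℂ such that j·z ≠ 1 for all integers j with 1 ≤ j ≤ n + 2, one has the identity 1 − Σ_{k=0}^{n} (−1)^k · k! · z^k / π_k(z) = (−1)^{n+1} · (n+1)! · z^{n+1} / π_n(z), where π_k(z) := Π_{j=1}^{k+1} (1 − j·z). -/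
open Finset

lemma prod_factor_ne_zero (m : ℕ) (z : ℂ)
    (hz : ∀ j : ℕ, 1 ≤ j → j ≤ m → (j : ℂ) * z ≠ 1) :
    (∏ j ∈ Finset.Icc 1 m, (1 - (j : ℂ) * z)) ≠ 0 := by
  apply Finset.prod_ne_zero_iff.2
  intro j hj
  rw [Finset.mem_Icc] at hj
  exact sub_ne_zero.2 (fun h => hz j hj.1 hj.2 h.symm)

/-- The telescoping identity
`1 − Σ_{k=0}^{n} (−1)^k k! z^k / π_k(z) = (−1)^{n+1} (n+1)! z^{n+1} / π_n(z)`,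
where `π_k(z) = Π_{j=1}^{k+1} (1 − j z)`, valid as soon as `j·z ≠ 1` for `1 ≤ j ≤ n+2`. -/
theorem telescoping_identity (n : ℕ) (z : ℂ)
    (hz : ∀ j : ℕ, 1 ≤ j → j ≤ n + 2 → (j : ℂ) * z ≠ 1) :
    1 - ∑ k ∈ Finset.range (n + 1),
        (-1) ^ k * (Nat.factorial k : ℂ) * z ^ k /
          (∏ j ∈ Finset.Icc 1 (k + 1), (1 - (j : ℂ) * z)) =
      (-1) ^ (n + 1) * (Nat.factorial (n + 1) : ℂ) * z ^ (n + 1) /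
        (∏ j ∈ Finset.Icc 1 (n + 1), (1 - (j : ℂ) * z)) := by
  induction n with
  | zero =>
      have h1 : (1 - z) ≠ 0 := by
        have := hz 1 le_rfl (by norm_num)
        intro h
        exact this (by push_cast; linear_combination -h)
      simp only [zero_add, Finset.sum_range_one, Finset.Icc_self, Finset.prod_singleton]
      push_cast
      field_simp
      rw [Nat.factorial_zero, Nat.factorial_one]; push_cast; ring
  | succ n ih =>
      have hz' : ∀ j : ℕ, 1 ≤ j → j ≤ n + 2 → (j : ℂ) * z ≠ 1 :=
        fun j h1 h2 => hz j h1 (by omega)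
      have ih' := ih hz'
      have hP1 : (∏ j ∈ Finset.Icc 1 (n + 1), (1 - (j : ℂ) * z)) ≠ 0 :=
        prod_factor_ne_zero (n + 1) z (fun j a b => hz' j a (by omega))
      have hlast : (1 - ((n : ℂ) + 2) * z) ≠ 0 := by
        have := hz (n + 2) (by omega) (by omega)
        intro h
        exact this (by push_cast; linear_combination -h)
      have hsplit : (∏ j ∈ Finset.Icc 1 (n + 2), (1 - (j : ℂ) * z)) =
          (∏ j ∈ Finset.Icc 1 (n + 1), (1 - (j : ℂ) * z)) * (1 - ((n : ℂ) + 2) * z) := by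
        rw [show n + 2 = (n + 1) + 1 from rfl,
          Finset.prod_Icc_succ_top (by omega : 1 ≤ n + 1 + 1)]
        push_cast
        ring
      rw [Finset.sum_range_succ, sub_add_eq_sub_sub, ih']
      have hfac : (Nat.factorial (n + 2) : ℂ) = (n + 2) * (Nat.factorial (n + 1)) := by
        rw [Nat.factorial_succ]; push_cast; ring
      rw [show n + 1 + 1 = n + 2 from rfl, hsplit, hfac]
      have hden := mul_ne_zero hP1 hlast
      rw [div_sub_div _ _ hP1 hden, div_eq_div_iff (mul_ne_zero hP1 hden) hden]
      ring
end

section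
/- In the ring ℂ[[z]] of formal power series, the family ((−1)^k · k! · z^k · π_k(z)^{−1})_{k≥0}, where π_k(z) := Π_{j=1}^{k+1}(1 − j·z) is invertible in ℂ[[z]] since its constant term is 1, is summable (the k-th term is divisible by z^k) and Σ_{k=0}^{∞} (−1)^k · k! · z^k · π_k(z)^{−1} = 1. -/
open PowerSeries

/-- `π_k(z) = Π_{j=1}^{k+1} (1 − j z)` as a formal power series over `ℂ`. -/
noncomputable def piP (k : ℕ) : PowerSeries ℂ :=
  ∏ j ∈ Finset.Icc 1 (k + 1), (1 - PowerSeries.C (j : ℂ) * PowerSeries.X)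

/-- The `k`-th term `(−1)^k k! z^k π_k(z)⁻¹` of the divergent expansion of `1`. -/
noncomputable def termP (k : ℕ) : PowerSeries ℂ :=
  PowerSeries.C ((-1) ^ k * (Nat.factorial k : ℂ)) * PowerSeries.X ^ k * (piP k)⁻¹

lemma piP_const (k : ℕ) : PowerSeries.constantCoeff (piP k) = 1 := by
  simp [piP]

lemma piP_const_ne (k : ℕ) : PowerSeries.constantCoeff (piP k) ≠ 0 := by
  simp [piP_const]

lemma piP_succ (n : ℕ) :
    piP (n + 1) = piP n * (1 - PowerSeries.C ((n : ℂ) + 2) * PowerSeries.X) := by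
  rw [piP, piP, Finset.prod_Icc_succ_top (by omega : 1 ≤ n + 1 + 1)]
  push_cast
  ring_nf
  simp only [mul_comm]
  ring

lemma lin_const (c : ℂ) :
    PowerSeries.constantCoeff (1 - PowerSeries.C c * PowerSeries.X) ≠ 0 := by
  simp

lemma key (n : ℕ) : ∑ k ∈ Finset.range (n + 1), termP k =
    1 + PowerSeries.C ((-1) ^ n * (Nat.factorial (n + 1) : ℂ)) *
      PowerSeries.X ^ (n + 1) * (piP n)⁻¹ := by
  induction n with
  | zero =>
    rw [Finset.sum_range_one, termP]
    have h : piP 0 = 1 - PowerSeries.C 1 * PowerSeries.X := by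
      simp [piP]
    have hc := piP_const_ne 0
    have := PowerSeries.mul_inv_cancel _ hc
    -- 1/(1-z) = 1 + z/(1-z)
    have : (piP 0)⁻¹ = 1 + PowerSeries.X * (piP 0)⁻¹ := by
      have h2 : (1 : PowerSeries ℂ) + PowerSeries.X * (piP 0)⁻¹
          = (piP 0 + PowerSeries.X) * (piP 0)⁻¹ := by
        rw [add_mul, PowerSeries.mul_inv_cancel _ hc]
      rw [h2, h]
      have : (1 : PowerSeries ℂ) - PowerSeries.C 1 * PowerSeries.X + PowerSeries.X = 1 := by
        simp
      rw [this, one_mul]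
    calc PowerSeries.C ((-1) ^ 0 * (Nat.factorial 0 : ℂ)) * PowerSeries.X ^ 0 * (piP 0)⁻¹
        = (piP 0)⁻¹ := by simp
      _ = 1 + PowerSeries.C ((-1) ^ 0 * (Nat.factorial 1 : ℂ)) * PowerSeries.X ^ 1 *
            (piP 0)⁻¹ := by simpa using this
  | succ n ih =>
    rw [Finset.sum_range_succ, ih, termP]
    have h1 : (piP n)⁻¹ =
        (1 - PowerSeries.C ((n : ℂ) + 2) * PowerSeries.X) * (piP (n + 1))⁻¹ := by
      rw [piP_succ, PowerSeries.mul_inv_rev, ← mul_assoc,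
        PowerSeries.mul_inv_cancel _ (lin_const _), one_mul]
    have hfac : ((Nat.factorial (n + 1 + 1) : ℂ)) =
        ((n : ℂ) + 2) * (Nat.factorial (n + 1) : ℂ) := by
      rw [Nat.factorial_succ]; push_cast; ring
    rw [h1, hfac]
    simp only [map_mul, map_add, map_sub, map_one, map_pow, map_neg, pow_succ]
    ring

/-- In `ℂ[[z]]`: each `π_k` has constant term `1` hence is invertible, the family
`((−1)^k k! z^k π_k⁻¹)_k` is summable (the `k`-th term is divisible by `z^k`), and its sum
is the constant series `1` (coefficientwise: for each `n` only the terms with `k ≤ n`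
contribute to the `n`-th coefficient, and they sum to the `n`-th coefficient of `1`). -/
theorem formal_expansion_of_one :
    (∀ k : ℕ, PowerSeries.constantCoeff (piP k) = 1 ∧ IsUnit (piP k)) ∧
    (∀ k : ℕ, (PowerSeries.X : PowerSeries ℂ) ^ k ∣ termP k) ∧
    (∀ n : ℕ, ∑ k ∈ Finset.range (n + 1), (PowerSeries.coeff n) (termP k) =
      (PowerSeries.coeff n) (1 : PowerSeries ℂ)) := by
  refine ⟨fun k => ⟨piP_const k, ?_⟩, fun k => ?_, fun n => ?_⟩
  · rw [PowerSeries.isUnit_iff_constantCoeff, piP_const]; exact isUnit_one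
  · exact ⟨PowerSeries.C ((-1) ^ k * (Nat.factorial k : ℂ)) * (piP k)⁻¹, by
      rw [termP]; ring⟩
  · rw [← map_sum, key n]
    have hd : (PowerSeries.X : PowerSeries ℂ) ^ (n + 1) ∣
        PowerSeries.C ((-1) ^ n * (Nat.factorial (n + 1) : ℂ)) *
          PowerSeries.X ^ (n + 1) * (piP n)⁻¹ :=
      ⟨PowerSeries.C ((-1) ^ n * (Nat.factorial (n + 1) : ℂ)) * (piP n)⁻¹, by ring⟩
    rw [map_add]
    have := (PowerSeries.X_pow_dvd_iff.mp hd) n (by omega)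
    rw [this, add_zero]
end

section
/- Let 0 < t ≤ 1 and 0 ≤ s < t, let f be holomorphic and bounded on the open disc D(0,t), and let θ be the operator (θg)(x) := x·g'(x). Then for every integer j ≥ 1, sup_{|x| ≤ s} |(θ^j f)(x)| ≤ (j/(t − s))^j · sup_{|x| < t} |f(x)|, where θ^j denotes the j-fold iterate of θ. -/
open Metric Set

/-- The Euler operator `θ = x d/dx`. -/
noncomputable def thetaOp (g : ℂ → ℂ) : ℂ → ℂ := fun x => x * deriv g x

/-- The supremum of `|f|` over a set `S`. -/
noncomputable def supNorm (f : ℂ → ℂ) (S : Set ℂ) : ℝ :=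
  sSup ((fun z => ‖f z‖) '' S)

/-- A Cauchy-type estimate: if `g` is holomorphic on `ball 0 t`, bounded by `M` for `|z| < r`
with `r ≤ t`, then `|g'(x)| ≤ M/δ` whenever `|x| + δ ≤ r`. -/
lemma cauchy_step {t r δ M : ℝ} {g : ℂ → ℂ} (hg : DifferentiableOn ℂ g (Metric.ball 0 t))
    (hrt : r ≤ t) (hM : ∀ z : ℂ, ‖z‖ < r → ‖g z‖ ≤ M)
    (hδ : 0 < δ) {x : ℂ} (hx : ‖x‖ + δ ≤ r) :
    ‖deriv g x‖ ≤ M / δ := by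
  have key : ∀ δ' : ℝ, δ' ∈ Set.Ioo (0:ℝ) δ → ‖deriv g x‖ * δ' ≤ M := by
    rintro δ' ⟨h0, h1⟩
    have hsub : closedBall x δ' ⊆ Metric.ball (0:ℂ) t := by
      intro z hz
      rw [Metric.mem_closedBall] at hz
      rw [Metric.mem_ball, dist_zero_right]
      have h2 : ‖z‖ - ‖x‖ ≤ ‖z - x‖ := norm_sub_norm_le z x
      have h3 : ‖z - x‖ = dist z x := (dist_eq_norm z x).symm
      have h4 : ‖x‖ = ‖x‖ := rfl
      nlinarith
    have hdc : DiffContOnCl ℂ g (Metric.ball x δ') := by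
      refine ⟨hg.mono (fun z hz => hsub (Metric.ball_subset_closedBall hz)), ?_⟩
      rw [closure_ball x h0.ne']
      exact hg.continuousOn.mono hsub
    have hb : ∀ z ∈ Metric.sphere x δ', ‖g z‖ ≤ M := by
      intro z hz
      rw [Metric.mem_sphere] at hz
      apply hM
      have h2 : ‖z‖ - ‖x‖ ≤ ‖z - x‖ := norm_sub_norm_le z x
      have h3 : ‖z - x‖ = dist z x := (dist_eq_norm z x).symm
      have h4 : ‖z‖ = ‖z‖ := rfl
      have h5 : ‖x‖ = ‖x‖ := rfl
      nlinarith
    have := Complex.norm_deriv_le_of_forall_mem_sphere_norm_le h0 hdc hb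
    rw [le_div_iff₀ h0] at this
    exact this
  have hmul : ‖deriv g x‖ * δ ≤ M := by
    have cont : Filter.Tendsto (fun δ' : ℝ => ‖deriv g x‖ * δ')
        (nhdsWithin δ (Set.Iio δ)) (nhds (‖deriv g x‖ * δ)) :=
      ((continuous_const.mul continuous_id).tendsto δ).mono_left nhdsWithin_le_nhds
    refine le_of_tendsto cont ?_
    filter_upwards [Ioo_mem_nhdsLT_of_mem (by constructor <;> simp [hδ] : δ ∈ Set.Ioc (0:ℝ) δ)]
      with δ' hδ' using key δ' hδ'
  rwa [le_div_iff₀ hδ]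

/-- For `f` bounded holomorphic on `D(0,t)` with `0 < t ≤ 1` and `0 ≤ s < t`, the iterates of
the Euler operator satisfy `sup_{|x| ≤ s} |θ^j f(x)| ≤ (j/(t−s))^j · sup_{|x| < t} |f(x)|`. -/
theorem euler_operator_estimate (t s : ℝ) (ht0 : 0 < t) (ht1 : t ≤ 1) (hs0 : 0 ≤ s)
    (hst : s < t) (f : ℂ → ℂ) (hf : DifferentiableOn ℂ f (Metric.ball 0 t))
    (hbdd : BddAbove ((fun z => ‖f z‖) '' Metric.ball (0 : ℂ) t)) :
    ∀ j : ℕ, 1 ≤ j → ∀ x : ℂ, ‖x‖ ≤ s →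
      ‖thetaOp^[j] f x‖ ≤
        ((j : ℝ) / (t - s)) ^ j * supNorm f (Metric.ball 0 t) := by
  intro j hj x hx
  set M := supNorm f (Metric.ball (0:ℂ) t) with hMdef
  have hM : ∀ z ∈ Metric.ball (0:ℂ) t, ‖f z‖ ≤ M :=
    fun z hz => le_csSup hbdd ⟨z, hz, rfl⟩
  have hjR : (0:ℝ) < j := by exact_mod_cast hj
  set δ : ℝ := (t - s) / j with hδdef
  have hδ : 0 < δ := div_pos (by linarith) hjR
  have hjδ : (j : ℝ) * δ = t - s := by
    rw [hδdef]; field_simp [hjR.ne']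
  -- differentiability of iterates
  have diffiter : ∀ k : ℕ, DifferentiableOn ℂ (thetaOp^[k] f) (Metric.ball 0 t) := by
    intro k
    induction k with
    | zero => simpa using hf
    | succ k ih =>
      rw [Function.iterate_succ_apply']
      show DifferentiableOn ℂ (fun x => x * deriv (thetaOp^[k] f) x) (Metric.ball 0 t)
      exact differentiableOn_id.mul
        ((ih.analyticOnNhd Metric.isOpen_ball).deriv.differentiableOn)
  -- main induction
  have Q : ∀ k : ℕ, ∀ z : ℂ, ‖z‖ + k * δ < t →
      ‖thetaOp^[k] f z‖ ≤ (1 / δ) ^ k * M := by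
    intro k
    induction k with
    | zero =>
      intro z hz
      push_cast at hz
      simp only [Function.iterate_zero_apply, pow_zero, one_mul]
      exact hM z (by rw [Metric.mem_ball, dist_zero_right]; linarith)
    | succ k ih =>
      intro z hz
      push_cast at hz
      have hzabs : ‖z‖ < 1 := by
        have : ‖z‖ < t := by nlinarith [norm_nonneg z, hδ.le]
        linarith
      have hd : ‖deriv (thetaOp^[k] f) z‖ ≤ (1 / δ) ^ k * M / δ := by
        refine cauchy_step (diffiter k) (r := t - k * δ) (by nlinarith [hδ.le]) ?_ hδ ?_
        · intro w hw
          exact ih w (by push_cast; linarith)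
        · linarith
      rw [Function.iterate_succ_apply']
      show ‖z * deriv (thetaOp^[k] f) z‖ ≤ _
      rw [norm_mul]
      calc ‖z‖ * ‖deriv (thetaOp^[k] f) z‖
          ≤ 1 * ((1 / δ) ^ k * M / δ) :=
            mul_le_mul hzabs.le hd (norm_nonneg _) zero_le_one
        _ = (1 / δ) ^ (k + 1) * M := by
            rw [one_mul, pow_succ]
            field_simp
  -- conclude
  obtain ⟨m, rfl⟩ : ∃ m, j = m + 1 := ⟨j - 1, (Nat.succ_pred_eq_of_pos hj).symm⟩
  have hsum : s + ((m:ℝ) + 1) * δ = t := by push_cast at hjδ ⊢; linarith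
  have hd : ‖deriv (thetaOp^[m] f) x‖ ≤ (1 / δ) ^ m * M / δ := by
    refine cauchy_step (diffiter m) (r := s + δ) (by nlinarith [hδ.le]) ?_ hδ (by linarith)
    intro w hw
    exact Q m w (by push_cast; nlinarith)
  have hx1 : ‖x‖ ≤ 1 := by linarith
  have hfinal : ‖thetaOp^[m + 1] f x‖ ≤ (1 / δ) ^ (m + 1) * M := by
    rw [Function.iterate_succ_apply']
    show ‖x * deriv (thetaOp^[m] f) x‖ ≤ _
    rw [norm_mul]
    calc ‖x‖ * ‖deriv (thetaOp^[m] f) x‖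
        ≤ 1 * ((1 / δ) ^ m * M / δ) :=
          mul_le_mul hx1 hd (norm_nonneg _) zero_le_one
      _ = (1 / δ) ^ (m + 1) * M := by
          rw [one_mul, pow_succ]
          field_simp
  have heq : (1 / δ : ℝ) = ((m:ℝ) + 1) / (t - s) := by
    rw [hδdef]
    push_cast
    rw [one_div_div]
  calc ‖thetaOp^[m + 1] f x‖ ≤ (1 / δ) ^ (m + 1) * M := hfinal
    _ = (((m + 1 : ℕ) : ℝ) / (t - s)) ^ (m + 1) * M := by rw [heq]; push_cast; ring_nf
end

section
/- Let x ∈ ℂ with |x| < 1 and let j ≥ 1 be an integer. Then the series Σ_{n=1}^{∞} n^j x^n converges absolutely, and for every real t with |x| < t < 1 one has |Σ_{n=1}^{∞} n^j x^n| ≤ (j/(t − |x|))^j · 1/(1 − t). In particular, for each fixed x with |x| < 1 there is a constant C > 0 with |Σ_{n=1}^{∞} n^j x^n| ≤ C^{j+1} · j^j for all j ≥ 1. -/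
lemma aux_pow_le_exp (j : ℕ) (y : ℝ) (hy : 0 ≤ y) : y ^ j ≤ (j : ℝ) ^ j * Real.exp y := by
  have h1 : y ^ j / (Nat.factorial j : ℝ) ≤ Real.exp y := by
    calc y ^ j / (Nat.factorial j : ℝ)
        ≤ ∑ i ∈ Finset.range (j + 1), y ^ i / (Nat.factorial i : ℝ) :=
          Finset.single_le_sum (f := fun i => y ^ i / (Nat.factorial i : ℝ))
            (fun i _ => by positivity) (Finset.self_mem_range_succ j)
      _ ≤ Real.exp y := Real.sum_le_exp_of_nonneg hy _
  have h2 : (Nat.factorial j : ℝ) ≤ (j : ℝ) ^ j := by exact_mod_cast Nat.factorial_le_pow j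
  have hfac : (0 : ℝ) < (Nat.factorial j : ℝ) := by positivity
  calc y ^ j = (Nat.factorial j : ℝ) * (y ^ j / (Nat.factorial j : ℝ)) := by field_simp
    _ ≤ (j : ℝ) ^ j * Real.exp y := mul_le_mul h2 h1 (by positivity) (by positivity)

lemma aux_geom (j k : ℕ) (r : ℝ) (hr0 : 0 ≤ r) (hr1 : r < 1) :
    (k : ℝ) ^ j * r ^ k ≤ ((j : ℝ) / (1 - r)) ^ j := by
  set c : ℝ := 1 - r with hc
  have hc0 : 0 < c := by simp only [hc]; linarith
  have hrk : r ^ k ≤ Real.exp (-(c * k)) := by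
    have h1 : r ≤ Real.exp (-c) := by
      have := Real.add_one_le_exp (-c)
      simp only [hc] at this ⊢; linarith
    calc r ^ k ≤ (Real.exp (-c)) ^ k := pow_le_pow_left₀ hr0 h1 k
      _ = Real.exp (-(c * k)) := by rw [← Real.exp_nat_mul]; ring_nf
  have hk : (c * k) ^ j ≤ (j : ℝ) ^ j * Real.exp (c * k) :=
    aux_pow_le_exp j _ (by positivity)
  have hkj : (k : ℝ) ^ j ≤ (j : ℝ) ^ j * Real.exp (c * k) / c ^ j := by
    rw [le_div_iff₀ (by positivity)]
    calc (k : ℝ) ^ j * c ^ j = (c * k) ^ j := by rw [mul_pow]; ring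
      _ ≤ _ := hk
  calc (k : ℝ) ^ j * r ^ k
      ≤ ((j : ℝ) ^ j * Real.exp (c * k) / c ^ j) * Real.exp (-(c * k)) :=
        mul_le_mul hkj hrk (by positivity) (by positivity)
    _ = (j : ℝ) ^ j / c ^ j := by
        rw [div_mul_eq_mul_div, mul_assoc, ← Real.exp_add]; simp
    _ = ((j : ℝ) / c) ^ j := (div_pow _ _ _).symm

lemma aux_term_bound (j : ℕ) (a t : ℝ) (ha0 : 0 ≤ a) (hat : a < t) (ht1 : t < 1) (n : ℕ) :
    ((n : ℝ) + 1) ^ j * a ^ (n + 1) ≤ ((j : ℝ) / (t - a)) ^ j * t ^ (n + 1) := by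
  have ht0 : 0 < t := lt_of_le_of_lt ha0 hat
  set r : ℝ := a / t with hr
  have hr0 : 0 ≤ r := by positivity
  have hr1 : r < 1 := (div_lt_one ht0).2 hat
  have ha : a = r * t := by rw [hr, div_mul_cancel₀ _ ht0.ne']
  have key : ((n : ℝ) + 1) ^ j * r ^ (n + 1) ≤ ((j : ℝ) / (t - a)) ^ j := by
    have h1 : ((n : ℝ) + 1) ^ j * r ^ (n + 1) ≤ ((j : ℝ) / (1 - r)) ^ j := by
      have := aux_geom j (n + 1) r hr0 hr1
      push_cast at this ⊢
      linarith
    refine h1.trans (pow_le_pow_left₀ (div_nonneg (Nat.cast_nonneg j) (by linarith)) ?_ j)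
    have h1r : 1 - r = (t - a) / t := by rw [eq_div_iff ht0.ne', ha]; ring
    rw [h1r, div_div_eq_mul_div, div_le_div_iff₀ (by linarith) (by linarith)]
    nlinarith [mul_nonneg (Nat.cast_nonneg (α := ℝ) j) (sub_pos.2 hat).le,
      mul_nonneg (sub_nonneg.2 ht1.le) (mul_nonneg (Nat.cast_nonneg (α := ℝ) j) (sub_pos.2 hat).le)]
  calc ((n : ℝ) + 1) ^ j * a ^ (n + 1)
      = (((n : ℝ) + 1) ^ j * r ^ (n + 1)) * t ^ (n + 1) := by rw [ha, mul_pow]; ring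
    _ ≤ ((j : ℝ) / (t - a)) ^ j * t ^ (n + 1) := by
        apply mul_le_mul_of_nonneg_right key (by positivity)

lemma aux_summable (j : ℕ) (a : ℝ) (ha0 : 0 ≤ a) (ha1 : a < 1) :
    Summable fun n : ℕ => ((n : ℝ) + 1) ^ j * a ^ (n + 1) := by
  have hg : Summable fun n : ℕ => (n : ℝ) ^ j * a ^ n := by
    have : ‖a‖ < 1 := by rw [Real.norm_eq_abs, abs_of_nonneg ha0]; exact ha1
    exact summable_pow_mul_geometric_of_norm_lt_one j this
  have := (summable_nat_add_iff 1).2 hg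
  refine this.congr fun n => ?_
  push_cast
  ring

/-- For `|x| < 1` and `j ≥ 1` the series `Σ_{n≥1} n^j x^n` converges absolutely, with
`|Σ_{n≥1} n^j x^n| ≤ (j/(t−|x|))^j · 1/(1−t)` for every `|x| < t < 1`; in particular for
each fixed `x` there is `C > 0` with `|Σ_{n≥1} n^j x^n| ≤ C^{j+1} j^j` for all `j ≥ 1`. -/
theorem poincare_coefficients_gevrey (x : ℂ) (hx : ‖x‖ < 1) :
    (∀ j : ℕ, 1 ≤ j →
      Summable fun n : ℕ => ‖((((n : ℂ) + 1)) ^ j * x ^ (n + 1))‖) ∧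
    (∀ j : ℕ, 1 ≤ j → ∀ t : ℝ, ‖x‖ < t → t < 1 →
      ‖(∑' n : ℕ, ((n : ℂ) + 1) ^ j * x ^ (n + 1))‖ ≤
        ((j : ℝ) / (t - ‖x‖)) ^ j * (1 / (1 - t))) ∧
    (∃ C : ℝ, 0 < C ∧ ∀ j : ℕ, 1 ≤ j →
      ‖(∑' n : ℕ, ((n : ℂ) + 1) ^ j * x ^ (n + 1))‖ ≤
        C ^ (j + 1) * (j : ℝ) ^ j) := by
  set a : ℝ := ‖x‖ with ha
  have ha0 : 0 ≤ a := norm_nonneg x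
  have habs : ∀ j n : ℕ, ‖((n : ℂ) + 1) ^ j * x ^ (n + 1)‖
      = ((n : ℝ) + 1) ^ j * a ^ (n + 1) := by
    intro j n
    rw [norm_mul, norm_pow, norm_pow]
    congr 2
    have : ((n : ℂ) + 1) = ((n + 1 : ℕ) : ℂ) := by push_cast; ring
    rw [this, Complex.norm_natCast]
    push_cast; ring
  have hsummable : ∀ j : ℕ,
      Summable fun n : ℕ => ‖((n : ℂ) + 1) ^ j * x ^ (n + 1)‖ := by
    intro j
    exact (aux_summable j a ha0 hx).congr fun n => (habs j n).symm
  have hmid : ∀ j : ℕ, 1 ≤ j → ∀ t : ℝ, a < t → t < 1 →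
      ‖∑' n : ℕ, ((n : ℂ) + 1) ^ j * x ^ (n + 1)‖ ≤
        ((j : ℝ) / (t - a)) ^ j * (1 / (1 - t)) := by
    intro j hj t hat ht1
    have ht0 : 0 < t := lt_of_le_of_lt ha0 hat
    have hst : Summable fun n : ℕ => ((j : ℝ) / (t - a)) ^ j * t ^ (n + 1) := by
      apply Summable.mul_left
      have : Summable fun n : ℕ => t ^ n := summable_geometric_of_lt_one ht0.le ht1
      exact (this.mul_left t).congr fun n => by rw [← pow_succ']
    calc ‖∑' n : ℕ, ((n : ℂ) + 1) ^ j * x ^ (n + 1)‖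
        ≤ ∑' n : ℕ, ‖((n : ℂ) + 1) ^ j * x ^ (n + 1)‖ := by
          have hs : Summable fun n : ℕ => ‖((n : ℂ) + 1) ^ j * x ^ (n + 1)‖ := by
            exact hsummable j
          exact norm_tsum_le_tsum_norm hs
      _ = ∑' n : ℕ, ((n : ℝ) + 1) ^ j * a ^ (n + 1) := by
          exact tsum_congr (habs j)
      _ ≤ ∑' n : ℕ, ((j : ℝ) / (t - a)) ^ j * t ^ (n + 1) := by
          exact Summable.tsum_le_tsum (fun n => aux_term_bound j a t ha0 hat ht1 n)
            (aux_summable j a ha0 hx) hst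
      _ = ((j : ℝ) / (t - a)) ^ j * (t * (1 - t)⁻¹) := by
          rw [tsum_mul_left]
          congr 1
          rw [← tsum_geometric_of_lt_one ht0.le ht1, ← tsum_mul_left]
          exact tsum_congr fun n => by rw [← pow_succ']
      _ ≤ ((j : ℝ) / (t - a)) ^ j * (1 / (1 - t)) := by
          apply mul_le_mul_of_nonneg_left _
            (pow_nonneg (div_nonneg (Nat.cast_nonneg j) (by linarith)) j)
          rw [one_div]
          exact mul_le_of_le_one_left (inv_nonneg.2 (by linarith)) ht1.le
  refine ⟨fun j _ => hsummable j, hmid, ?_⟩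
  refine ⟨2 / (1 - a), div_pos two_pos (by linarith), fun j hj => ?_⟩
  set C : ℝ := 2 / (1 - a) with hC
  have hC0 : 0 < C := div_pos two_pos (by linarith)
  have h := hmid j hj ((1 + a) / 2) (by linarith) (by linarith)
  have h1 : (1 + a) / 2 - a = (1 - a) / 2 := by ring
  have h2 : 1 - (1 + a) / 2 = (1 - a) / 2 := by ring
  rw [h1, h2] at h
  refine h.trans (le_of_eq ?_)
  have h3 : (j : ℝ) / ((1 - a) / 2) = C * j := by
    rw [hC]; field_simp
  have h4 : 1 / ((1 - a) / 2) = C := by rw [hC]; field_simp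
  rw [h3, h4, mul_pow, pow_succ]
  ring
end
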